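/- For every element ψ of the even subalgebra Cℓ⁰(1,3) of the real spacetime algebra, the product ψ * reverse(ψ) lies in the two-dimensional real subspace spanned by 1 and the pseudoscalar γ₅; that is, there exist real numbers σ and ω with ψ * reverse(ψ) = σ·1 + ω·γ₅. -/

import Mathlib

open CliffordAlgebra

noncomputable def Q13 : QuadraticForm ℝ (Fin 4 → ℝ) :=
  QuadraticMap.weightedSumSquares ℝ ![(1 : ℝ), -1, -1, -1]

/-- The spacetime algebra `Cℓ(1,3)`. -/
noncomputable abbrev STA : Type := CliffordAlgebra Q13

/-- The generators `γμ`. -/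
noncomputable def γ (μ : Fin 4) : STA := ι Q13 (Pi.single μ 1)

/-- The pseudoscalar `γ₅ = γ₀γ₁γ₂γ₃`. -/
noncomputable def γ₅ : STA := γ 0 * γ 1 * γ 2 * γ 3

/-! ### Auxiliary: quaternionic matrix representation -/

open Quaternion Matrix

noncomputable def qmk (a b c d : ℝ) : ℍ[ℝ] := ⟨a,b,c,d⟩
@[simp] lemma qmk_re (a b c d : ℝ) : (qmk a b c d).re = a := rfl
@[simp] lemma qmk_imI (a b c d : ℝ) : (qmk a b c d).imI = b := rfl
@[simp] lemma qmk_imJ (a b c d : ℝ) : (qmk a b c d).imJ = c := rfl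
@[simp] lemma qmk_imK (a b c d : ℝ) : (qmk a b c d).imK = d := rfl

noncomputable def qi : ℍ[ℝ] := qmk 0 1 0 0
noncomputable def qj : ℍ[ℝ] := qmk 0 0 1 0
noncomputable def qk : ℍ[ℝ] := qmk 0 0 0 1

noncomputable abbrev A2 : Type := Matrix (Fin 2) (Fin 2) ℍ[ℝ]

noncomputable def G : Fin 4 → A2 :=
  ![!![1,0;0,-1], !![0,qi;qi,0], !![0,qj;qj,0], !![0,qk;qk,0]]

lemma algA2 (r : ℝ) : algebraMap ℝ A2 r = !![(r:ℍ[ℝ]),0;0,(r:ℝ)] := by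
  ext i j <;> fin_cases i <;> fin_cases j <;>
    simp [Matrix.algebraMap_matrix_apply]

noncomputable def fA : (Fin 4 → ℝ) →ₗ[ℝ] A2 :=
  ∑ μ : Fin 4, (LinearMap.proj μ).smulRight (G μ)

lemma fA_apply (x : Fin 4 → ℝ) :
    fA x = !![qmk (x 0) 0 0 0, qmk 0 (x 1) (x 2) (x 3); qmk 0 (x 1) (x 2) (x 3), qmk (-x 0) 0 0 0] := by
  ext i j <;> fin_cases i <;> fin_cases j <;>
    simp [fA, Fin.sum_univ_four, G, qi, qj, qk]

lemma Q13_apply (x : Fin 4 → ℝ) :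
    Q13 x = x 0 * x 0 - x 1 * x 1 - x 2 * x 2 - x 3 * x 3 := by
  rw [Q13, QuadraticMap.weightedSumSquares_apply, Fin.sum_univ_four]
  simp; ring

set_option maxHeartbeats 1000000 in
lemma fA_sq (x : Fin 4 → ℝ) : fA x * fA x = algebraMap ℝ A2 (Q13 x) := by
  rw [fA_apply, algA2, Matrix.mul_fin_two, Q13_apply]
  ext i j <;> fin_cases i <;> fin_cases j <;>
    simp [Quaternion.ext_iff] <;> ring

noncomputable def ρ : STA →ₐ[ℝ] A2 := CliffordAlgebra.lift Q13 ⟨fA, fA_sq⟩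

lemma ρ_ι (m : Fin 4 → ℝ) : ρ (ι Q13 m) = fA m := CliffordAlgebra.lift_ι_apply _ _ m

lemma ρ_γ (μ : Fin 4) : ρ (γ μ) = G μ := by
  rw [γ, ρ_ι, fA_apply]
  fin_cases μ <;>
    · ext i j <;> fin_cases i <;> fin_cases j <;>
        simp [G, qi, qj, qk, Pi.single_apply]

noncomputable def P : A2 := !![0,-1;1,0]

set_option maxHeartbeats 1000000 in
lemma ρ_γ₅ : ρ γ₅ = P := by
  rw [γ₅, _root_.map_mul, _root_.map_mul, _root_.map_mul, ρ_γ, ρ_γ, ρ_γ, ρ_γ]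
  show !![1,0;0,-1] * !![0,qi;qi,0] * !![0,qj;qj,0] * !![0,qk;qk,0] = P
  rw [Matrix.mul_fin_two, Matrix.mul_fin_two, Matrix.mul_fin_two]
  unfold P
  ext i j <;> fin_cases i <;> fin_cases j <;>
    simp [qi, qj, qk, Quaternion.ext_iff, Quaternion.re_mul, Quaternion.imI_mul,
      Quaternion.imJ_mul, Quaternion.imK_mul]

lemma G0_mul_G0 : G 0 * G 0 = 1 := by
  show !![1,0;0,-1] * !![(1:ℍ[ℝ]),0;0,-1] = 1
  rw [Matrix.mul_fin_two]
  ext i j <;> fin_cases i <;> fin_cases j <;> simp [Quaternion.ext_iff, Matrix.one_apply]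

lemma star2 (a b c d : ℍ[ℝ]) : star !![a,b;c,d] = !![star a, star c; star b, star d] := by
  ext i j <;> fin_cases i <;> fin_cases j <;>
    simp [Matrix.star_eq_conjTranspose, Matrix.conjTranspose_apply]

lemma star_fA (m : Fin 4 → ℝ) : G 0 * star (fA m) * G 0 = fA m := by
  rw [fA_apply]
  show !![1,0;0,-1] * star _ * !![1,0;0,-1] = _
  rw [star2, Matrix.mul_fin_two, Matrix.mul_fin_two]
  ext i j <;> fin_cases i <;> fin_cases j <;> simp [Quaternion.ext_iff]

lemma ρ_reverse (x : STA) : ρ (reverse (Q := Q13) x) = G 0 * star (ρ x) * G 0 := by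
  induction x using CliffordAlgebra.induction with
  | algebraMap r =>
      rw [reverse.commutes, AlgHom.commutes, algA2]
      show _ = G 0 * star !![((r:ℝ):ℍ[ℝ]),0;0,(r:ℝ)] * G 0
      show (_ : A2) = !![1,0;0,-1] * star !![((r:ℝ):ℍ[ℝ]),0;0,(r:ℝ)] * !![1,0;0,-1]
      rw [star2, Matrix.mul_fin_two, Matrix.mul_fin_two]
      ext i j <;> fin_cases i <;> fin_cases j <;> simp [Quaternion.ext_iff]
  | ι m => rw [reverse_ι, ρ_ι, star_fA]
  | mul x y hx hy =>
      rw [reverse.map_mul, _root_.map_mul, _root_.map_mul, hx, hy, StarMul.star_mul]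
      rw [show G 0 * star (ρ y) * G 0 * (G 0 * star (ρ x) * G 0)
            = G 0 * star (ρ y) * (G 0 * G 0) * star (ρ x) * G 0 by noncomm_ring]
      rw [G0_mul_G0]
      noncomm_ring
  | add x y hx hy =>
      simp only [_root_.map_add, star_add, hx, hy]
      noncomm_ring

lemma fA_anti (m : Fin 4 → ℝ) : fA m * P = -(P * fA m) := by
  rw [fA_apply]; unfold P
  rw [Matrix.mul_fin_two, Matrix.mul_fin_two]
  ext i j <;> fin_cases i <;> fin_cases j <;> simp [Quaternion.ext_iff]

lemma ρ_even_comm (ψ : STA) (hψ : ψ ∈ CliffordAlgebra.even Q13) : ρ ψ * P = P * ρ ψ := by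
  rw [← Subalgebra.mem_toSubmodule, CliffordAlgebra.even_toSubmodule] at hψ
  induction ψ, hψ using CliffordAlgebra.even_induction with
  | algebraMap r =>
      rw [AlgHom.commutes, Algebra.commutes]
  | add x y hx hy ihx ihy =>
      rw [_root_.map_add, add_mul, mul_add, ihx, ihy]
  | ι_mul_ι_mul m₁ m₂ x hx ih =>
      rw [_root_.map_mul, _root_.map_mul, ρ_ι, ρ_ι, mul_assoc, mul_assoc, ih,
        show fA m₂ * (P * ρ x) = fA m₂ * P * ρ x by noncomm_ring, fA_anti,
        show fA m₁ * (-(P * fA m₂) * ρ x) = -(fA m₁ * P) * (fA m₂ * ρ x) by noncomm_ring,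
        fA_anti]
      noncomm_ring

/-! ### Relations among the generators -/

lemma γ_sq : ∀ μ : Fin 4, γ μ * γ μ = algebraMap ℝ STA (Q13 (Pi.single μ 1)) :=
  fun μ => CliffordAlgebra.ι_sq_scalar Q13 _

lemma γ0_sq : γ 0 * γ 0 = 1 := by
  rw [γ_sq, Q13_apply]; simp
lemma γ1_sq : γ 1 * γ 1 = -1 := by
  rw [γ_sq, Q13_apply]; simp [Pi.single_apply]
lemma γ2_sq : γ 2 * γ 2 = -1 := by
  rw [γ_sq, Q13_apply]; simp [Pi.single_apply]
lemma γ3_sq : γ 3 * γ 3 = -1 := by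
  rw [γ_sq, Q13_apply]; simp [Pi.single_apply]

lemma γ_anti {μ ν : Fin 4} (h : μ ≠ ν) : γ μ * γ ν = -(γ ν * γ μ) := by
  have hpol : QuadraticMap.polar Q13 (Pi.single μ 1) (Pi.single ν 1) = 0 := by
    rw [QuadraticMap.polar]
    simp only [Q13_apply, Pi.add_apply]
    fin_cases μ <;> fin_cases ν <;> simp_all [Pi.single_apply] <;> ring
  have h2 := CliffordAlgebra.ι_mul_ι_add_swap (Q := Q13) (Pi.single μ 1) (Pi.single ν 1)
  rw [hpol, map_zero] at h2
  rw [γ, γ]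
  rw [eq_neg_of_add_eq_zero_left h2]

lemma γ0_sq' (x : STA) : γ 0 * (γ 0 * x) = x := by rw [← mul_assoc, γ0_sq, one_mul]
lemma γ1_sq' (x : STA) : γ 1 * (γ 1 * x) = -x := by rw [← mul_assoc, γ1_sq, neg_one_mul]
lemma γ2_sq' (x : STA) : γ 2 * (γ 2 * x) = -x := by rw [← mul_assoc, γ2_sq, neg_one_mul]
lemma γ3_sq' (x : STA) : γ 3 * (γ 3 * x) = -x := by rw [← mul_assoc, γ3_sq, neg_one_mul]

lemma g10 : γ 1 * γ 0 = -(γ 0 * γ 1) := γ_anti (by decide)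
lemma g20 : γ 2 * γ 0 = -(γ 0 * γ 2) := γ_anti (by decide)
lemma g21 : γ 2 * γ 1 = -(γ 1 * γ 2) := γ_anti (by decide)
lemma g30 : γ 3 * γ 0 = -(γ 0 * γ 3) := γ_anti (by decide)
lemma g31 : γ 3 * γ 1 = -(γ 1 * γ 3) := γ_anti (by decide)
lemma g32 : γ 3 * γ 2 = -(γ 2 * γ 3) := γ_anti (by decide)

lemma g10' (x : STA) : γ 1 * (γ 0 * x) = -(γ 0 * (γ 1 * x)) := by
  rw [← mul_assoc, g10, neg_mul, mul_assoc]
lemma g20' (x : STA) : γ 2 * (γ 0 * x) = -(γ 0 * (γ 2 * x)) := by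
  rw [← mul_assoc, g20, neg_mul, mul_assoc]
lemma g21' (x : STA) : γ 2 * (γ 1 * x) = -(γ 1 * (γ 2 * x)) := by
  rw [← mul_assoc, g21, neg_mul, mul_assoc]
lemma g30' (x : STA) : γ 3 * (γ 0 * x) = -(γ 0 * (γ 3 * x)) := by
  rw [← mul_assoc, g30, neg_mul, mul_assoc]
lemma g31' (x : STA) : γ 3 * (γ 1 * x) = -(γ 1 * (γ 3 * x)) := by
  rw [← mul_assoc, g31, neg_mul, mul_assoc]
lemma g32' (x : STA) : γ 3 * (γ 2 * x) = -(γ 2 * (γ 3 * x)) := by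
  rw [← mul_assoc, g32, neg_mul, mul_assoc]

/-! ### Spanning -/

noncomputable def bs : Fin 16 → STA :=
![1, γ 0, γ 1, γ 2, γ 3,
  γ 0 * γ 1, γ 0 * γ 2, γ 0 * γ 3, γ 1 * γ 2, γ 1 * γ 3, γ 2 * γ 3,
  γ 0 * (γ 1 * γ 2), γ 0 * (γ 1 * γ 3), γ 0 * (γ 2 * γ 3), γ 1 * (γ 2 * γ 3),
  γ 0 * (γ 1 * (γ 2 * γ 3))]

noncomputable def Sspan : Submodule ℝ STA := Submodule.span ℝ (Set.range bs)

lemma hb (i : Fin 16) : bs i ∈ Sspan := Submodule.subset_span ⟨i, rfl⟩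

lemma bs0 (h : 0 < 16) : bs ⟨0,h⟩ = 1 := rfl
lemma bs1 (h : 1 < 16) : bs ⟨1,h⟩ = γ 0 := rfl
lemma bs2 (h : 2 < 16) : bs ⟨2,h⟩ = γ 1 := rfl
lemma bs3 (h : 3 < 16) : bs ⟨3,h⟩ = γ 2 := rfl
lemma bs4 (h : 4 < 16) : bs ⟨4,h⟩ = γ 3 := rfl
lemma bs5 (h : 5 < 16) : bs ⟨5,h⟩ = γ 0 * γ 1 := rfl
lemma bs6 (h : 6 < 16) : bs ⟨6,h⟩ = γ 0 * γ 2 := rfl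
lemma bs7 (h : 7 < 16) : bs ⟨7,h⟩ = γ 0 * γ 3 := rfl
lemma bs8 (h : 8 < 16) : bs ⟨8,h⟩ = γ 1 * γ 2 := rfl
lemma bs9 (h : 9 < 16) : bs ⟨9,h⟩ = γ 1 * γ 3 := rfl
lemma bs10 (h : 10 < 16) : bs ⟨10,h⟩ = γ 2 * γ 3 := rfl
lemma bs11 (h : 11 < 16) : bs ⟨11,h⟩ = γ 0 * (γ 1 * γ 2) := rfl
lemma bs12 (h : 12 < 16) : bs ⟨12,h⟩ = γ 0 * (γ 1 * γ 3) := rfl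
lemma bs13 (h : 13 < 16) : bs ⟨13,h⟩ = γ 0 * (γ 2 * γ 3) := rfl
lemma bs14 (h : 14 < 16) : bs ⟨14,h⟩ = γ 1 * (γ 2 * γ 3) := rfl
lemma bs15 (h : 15 < 16) : bs ⟨15,h⟩ = γ 0 * (γ 1 * (γ 2 * γ 3)) := rfl
lemma γmk0 (h : 0 < 4) : γ ⟨0,h⟩ = γ 0 := rfl
lemma γmk1 (h : 1 < 4) : γ ⟨1,h⟩ = γ 1 := rfl
lemma γmk2 (h : 2 < 4) : γ ⟨2,h⟩ = γ 2 := rfl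
lemma γmk3 (h : 3 < 4) : γ ⟨3,h⟩ = γ 3 := rfl

set_option maxHeartbeats 1000000 in
lemma γ_mul_bs (μ : Fin 4) (i : Fin 16) : γ μ * bs i ∈ Sspan := by
  fin_cases μ <;> fin_cases i <;>
    simp only [bs0, bs1, bs2, bs3, bs4, bs5, bs6, bs7, bs8, bs9, bs10, bs11, bs12, bs13, bs14, bs15, γmk0, γmk1, γmk2, γmk3,
      γ0_sq', γ1_sq', γ2_sq', γ3_sq', g10', g20', g21', g30', g31', g32',
      γ0_sq, γ1_sq, γ2_sq, γ3_sq, g10, g20, g21, g30, g31, g32,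
      mul_one, one_mul, mul_neg, neg_mul, neg_neg, mul_neg_one, neg_mem_iff] <;>
    (first | exact hb 0 | exact hb 1 | exact hb 2 | exact hb 3 | exact hb 4 | exact hb 5 | exact hb 6 | exact hb 7 | exact hb 8 | exact hb 9 | exact hb 10 | exact hb 11 | exact hb 12 | exact hb 13 | exact hb 14 | exact hb 15)

lemma γ_mul_mem (μ : Fin 4) {x : STA} (hx : x ∈ Sspan) : γ μ * x ∈ Sspan := by
  induction hx using Submodule.span_induction with
  | mem y hy => obtain ⟨i, rfl⟩ := hy; exact γ_mul_bs μ i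
  | zero => rw [mul_zero]; exact zero_mem _
  | add y z _ _ ihy ihz => rw [mul_add]; exact add_mem ihy ihz
  | smul r y _ ih => rw [mul_smul_comm]; exact Submodule.smul_mem _ _ ih

lemma ι_decomp (m : Fin 4 → ℝ) :
    ι Q13 m = m 0 • γ 0 + m 1 • γ 1 + m 2 • γ 2 + m 3 • γ 3 := by
  unfold γ
  rw [← _root_.map_smul, ← _root_.map_smul, ← _root_.map_smul, ← _root_.map_smul, ← _root_.map_add, ← _root_.map_add, ← _root_.map_add]
  congr 1
  funext j; fin_cases j <;> simp [Pi.single_apply]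

lemma span_top (x : STA) : x ∈ Sspan := by
  induction x using CliffordAlgebra.left_induction with
  | algebraMap r =>
      have := Sspan.smul_mem r (hb 0)
      rw [Algebra.algebraMap_eq_smul_one]; exact this
  | add x y hx hy => exact add_mem hx hy
  | ι_mul x m hx =>
      rw [ι_decomp, add_mul, add_mul, add_mul, smul_mul_assoc, smul_mul_assoc,
        smul_mul_assoc, smul_mul_assoc]
      exact add_mem (add_mem (add_mem (Sspan.smul_mem _ (γ_mul_mem 0 hx))
        (Sspan.smul_mem _ (γ_mul_mem 1 hx))) (Sspan.smul_mem _ (γ_mul_mem 2 hx)))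
        (Sspan.smul_mem _ (γ_mul_mem 3 hx))

noncomputable def Bs : Fin 16 → A2 :=
![1, !![1,0;0,-1], !![0,qi;qi,0], !![0,qj;qj,0], !![0,qk;qk,0],
  !![0,qi;-qi,0], !![0,qj;-qj,0], !![0,qk;-qk,0],
  !![qk,0;0,qk], !![-qj,0;0,-qj], !![qi,0;0,qi],
  !![qk,0;0,-qk], !![-qj,0;0,qj], !![qi,0;0,-qi],
  !![0,-1;-1,0], !![0,-1;1,0]]

lemma bso0 : bs (0 : Fin 16) = 1 := rfl
lemma Bso0 : Bs (0 : Fin 16) = 1 := rfl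
lemma bso1 : bs (1 : Fin 16) = γ 0 := rfl
lemma Bso1 : Bs (1 : Fin 16) = !![1,0;0,-1] := rfl
lemma bso2 : bs (2 : Fin 16) = γ 1 := rfl
lemma Bso2 : Bs (2 : Fin 16) = !![0,qi;qi,0] := rfl
lemma bso3 : bs (3 : Fin 16) = γ 2 := rfl
lemma Bso3 : Bs (3 : Fin 16) = !![0,qj;qj,0] := rfl
lemma bso4 : bs (4 : Fin 16) = γ 3 := rfl
lemma Bso4 : Bs (4 : Fin 16) = !![0,qk;qk,0] := rfl
lemma bso5 : bs (5 : Fin 16) = γ 0 * γ 1 := rfl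
lemma Bso5 : Bs (5 : Fin 16) = !![0,qi;-qi,0] := rfl
lemma bso6 : bs (6 : Fin 16) = γ 0 * γ 2 := rfl
lemma Bso6 : Bs (6 : Fin 16) = !![0,qj;-qj,0] := rfl
lemma bso7 : bs (7 : Fin 16) = γ 0 * γ 3 := rfl
lemma Bso7 : Bs (7 : Fin 16) = !![0,qk;-qk,0] := rfl
lemma bso8 : bs (8 : Fin 16) = γ 1 * γ 2 := rfl
lemma Bso8 : Bs (8 : Fin 16) = !![qk,0;0,qk] := rfl
lemma bso9 : bs (9 : Fin 16) = γ 1 * γ 3 := rfl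
lemma Bso9 : Bs (9 : Fin 16) = !![-qj,0;0,-qj] := rfl
lemma bso10 : bs (10 : Fin 16) = γ 2 * γ 3 := rfl
lemma Bso10 : Bs (10 : Fin 16) = !![qi,0;0,qi] := rfl
lemma bso11 : bs (11 : Fin 16) = γ 0 * (γ 1 * γ 2) := rfl
lemma Bso11 : Bs (11 : Fin 16) = !![qk,0;0,-qk] := rfl
lemma bso12 : bs (12 : Fin 16) = γ 0 * (γ 1 * γ 3) := rfl
lemma Bso12 : Bs (12 : Fin 16) = !![-qj,0;0,qj] := rfl
lemma bso13 : bs (13 : Fin 16) = γ 0 * (γ 2 * γ 3) := rfl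
lemma Bso13 : Bs (13 : Fin 16) = !![qi,0;0,-qi] := rfl
lemma bso14 : bs (14 : Fin 16) = γ 1 * (γ 2 * γ 3) := rfl
lemma Bso14 : Bs (14 : Fin 16) = !![0,-1;-1,0] := rfl
lemma bso15 : bs (15 : Fin 16) = γ 0 * (γ 1 * (γ 2 * γ 3)) := rfl
lemma Bso15 : Bs (15 : Fin 16) = !![0,-1;1,0] := rfl
lemma bsm0 (h : 0 < 16) : bs ⟨0,h⟩ = 1 := rfl
lemma Bsm0 (h : 0 < 16) : Bs ⟨0,h⟩ = 1 := rfl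
lemma bsm1 (h : 1 < 16) : bs ⟨1,h⟩ = γ 0 := rfl
lemma Bsm1 (h : 1 < 16) : Bs ⟨1,h⟩ = !![1,0;0,-1] := rfl
lemma bsm2 (h : 2 < 16) : bs ⟨2,h⟩ = γ 1 := rfl
lemma Bsm2 (h : 2 < 16) : Bs ⟨2,h⟩ = !![0,qi;qi,0] := rfl
lemma bsm3 (h : 3 < 16) : bs ⟨3,h⟩ = γ 2 := rfl
lemma Bsm3 (h : 3 < 16) : Bs ⟨3,h⟩ = !![0,qj;qj,0] := rfl
lemma bsm4 (h : 4 < 16) : bs ⟨4,h⟩ = γ 3 := rfl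
lemma Bsm4 (h : 4 < 16) : Bs ⟨4,h⟩ = !![0,qk;qk,0] := rfl
lemma bsm5 (h : 5 < 16) : bs ⟨5,h⟩ = γ 0 * γ 1 := rfl
lemma Bsm5 (h : 5 < 16) : Bs ⟨5,h⟩ = !![0,qi;-qi,0] := rfl
lemma bsm6 (h : 6 < 16) : bs ⟨6,h⟩ = γ 0 * γ 2 := rfl
lemma Bsm6 (h : 6 < 16) : Bs ⟨6,h⟩ = !![0,qj;-qj,0] := rfl
lemma bsm7 (h : 7 < 16) : bs ⟨7,h⟩ = γ 0 * γ 3 := rfl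
lemma Bsm7 (h : 7 < 16) : Bs ⟨7,h⟩ = !![0,qk;-qk,0] := rfl
lemma bsm8 (h : 8 < 16) : bs ⟨8,h⟩ = γ 1 * γ 2 := rfl
lemma Bsm8 (h : 8 < 16) : Bs ⟨8,h⟩ = !![qk,0;0,qk] := rfl
lemma bsm9 (h : 9 < 16) : bs ⟨9,h⟩ = γ 1 * γ 3 := rfl
lemma Bsm9 (h : 9 < 16) : Bs ⟨9,h⟩ = !![-qj,0;0,-qj] := rfl
lemma bsm10 (h : 10 < 16) : bs ⟨10,h⟩ = γ 2 * γ 3 := rfl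
lemma Bsm10 (h : 10 < 16) : Bs ⟨10,h⟩ = !![qi,0;0,qi] := rfl
lemma bsm11 (h : 11 < 16) : bs ⟨11,h⟩ = γ 0 * (γ 1 * γ 2) := rfl
lemma Bsm11 (h : 11 < 16) : Bs ⟨11,h⟩ = !![qk,0;0,-qk] := rfl
lemma bsm12 (h : 12 < 16) : bs ⟨12,h⟩ = γ 0 * (γ 1 * γ 3) := rfl
lemma Bsm12 (h : 12 < 16) : Bs ⟨12,h⟩ = !![-qj,0;0,qj] := rfl
lemma bsm13 (h : 13 < 16) : bs ⟨13,h⟩ = γ 0 * (γ 2 * γ 3) := rfl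
lemma Bsm13 (h : 13 < 16) : Bs ⟨13,h⟩ = !![qi,0;0,-qi] := rfl
lemma bsm14 (h : 14 < 16) : bs ⟨14,h⟩ = γ 1 * (γ 2 * γ 3) := rfl
lemma Bsm14 (h : 14 < 16) : Bs ⟨14,h⟩ = !![0,-1;-1,0] := rfl
lemma bsm15 (h : 15 < 16) : bs ⟨15,h⟩ = γ 0 * (γ 1 * (γ 2 * γ 3)) := rfl
lemma Bsm15 (h : 15 < 16) : Bs ⟨15,h⟩ = !![0,-1;1,0] := rfl

set_option maxHeartbeats 2000000 in
lemma ρ_bs (i : Fin 16) : ρ (bs i) = Bs i := by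
  fin_cases i <;>
    simp only [bso0, bso1, bso2, bso3, bso4, bso5, bso6, bso7, bso8, bso9, bso10, bso11, bso12, bso13, bso14, bso15, Bso0, Bso1, Bso2, Bso3, Bso4, Bso5, Bso6, Bso7, Bso8, Bso9, Bso10, Bso11, Bso12, Bso13, Bso14, Bso15, bsm0, Bsm0, bsm1, Bsm1, bsm2, Bsm2, bsm3, Bsm3, bsm4, Bsm4, bsm5, Bsm5, bsm6, Bsm6, bsm7, Bsm7, bsm8, Bsm8, bsm9, Bsm9, bsm10, Bsm10, bsm11, Bsm11, bsm12, Bsm12, bsm13, Bsm13, bsm14, Bsm14, bsm15, Bsm15, _root_.map_mul, _root_.map_one, ρ_γ] <;>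
    · show _ = (_ : A2)
      ext i j <;> fin_cases i <;> fin_cases j <;>
        simp [ρ_γ, G, qi, qj, qk, Matrix.mul_apply, Fin.sum_univ_two, Matrix.one_apply,
          Quaternion.ext_iff, Quaternion.re_mul, Quaternion.imI_mul, Quaternion.imJ_mul,
          Quaternion.imK_mul]

noncomputable def s : A2 →ₗ[ℝ] STA where
  toFun M :=
    (((M 0 0).re + (M 1 1).re)/2) • bs 0 +
    (((M 0 0).re - (M 1 1).re)/2) • bs 1 +
    (((M 0 1).imI + (M 1 0).imI)/2) • bs 2 +
    (((M 0 1).imJ + (M 1 0).imJ)/2) • bs 3 +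
    (((M 0 1).imK + (M 1 0).imK)/2) • bs 4 +
    (((M 0 1).imI - (M 1 0).imI)/2) • bs 5 +
    (((M 0 1).imJ - (M 1 0).imJ)/2) • bs 6 +
    (((M 0 1).imK - (M 1 0).imK)/2) • bs 7 +
    (((M 0 0).imK + (M 1 1).imK)/2) • bs 8 +
    (-(((M 0 0).imJ + (M 1 1).imJ)/2)) • bs 9 +
    (((M 0 0).imI + (M 1 1).imI)/2) • bs 10 +
    (((M 0 0).imK - (M 1 1).imK)/2) • bs 11 +
    (-(((M 0 0).imJ - (M 1 1).imJ)/2)) • bs 12 +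
    (((M 0 0).imI - (M 1 1).imI)/2) • bs 13 +
    (-(((M 0 1).re + (M 1 0).re)/2)) • bs 14 +
    (((M 1 0).re - (M 0 1).re)/2) • bs 15
  map_add' M N := by
    simp only [Matrix.add_apply, Quaternion.re_add, Quaternion.imI_add, Quaternion.imJ_add,
      Quaternion.imK_add]
    module
  map_smul' r M := by
    simp only [Matrix.smul_apply, Quaternion.re_smul, Quaternion.imI_smul, Quaternion.imJ_smul,
      Quaternion.imK_smul, smul_eq_mul, RingHom.id_apply]
    module

set_option maxHeartbeats 1000000 in
lemma s_Bs (i : Fin 16) : s (Bs i) = bs i := by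
  fin_cases i <;>
    · simp only [s, LinearMap.coe_mk, AddHom.coe_mk]
      norm_num [Matrix.one_apply, qi, qj, qk,
        bso0, bso1, bso2, bso3, bso4, bso5, bso6, bso7, bso8, bso9, bso10, bso11, bso12,
        bso13, bso14, bso15,
        Bso0, Bso1, Bso2, Bso3, Bso4, Bso5, Bso6, Bso7, Bso8, Bso9, Bso10, Bso11, Bso12,
        Bso13, Bso14, Bso15,
        bsm0, bsm1, bsm2, bsm3, bsm4, bsm5, bsm6, bsm7, bsm8, bsm9, bsm10, bsm11, bsm12,
        bsm13, bsm14, bsm15,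
        Bsm0, Bsm1, Bsm2, Bsm3, Bsm4, Bsm5, Bsm6, Bsm7, Bsm8, Bsm9, Bsm10, Bsm11, Bsm12,
        Bsm13, Bsm14, Bsm15]

lemma s_ρ (x : STA) : s (ρ x) = x := by
  have hx := span_top x
  induction hx using Submodule.span_induction with
  | mem y hy => obtain ⟨i, rfl⟩ := hy; rw [ρ_bs]; exact s_Bs i
  | zero => simp
  | add y z _ _ ihy ihz => rw [_root_.map_add, _root_.map_add, ihy, ihz]
  | smul r y _ ih => rw [_root_.map_smul, _root_.map_smul, ih]

lemma ρ_inj : Function.Injective ρ := fun x y h => by rw [← s_ρ x, h, s_ρ y]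

set_option maxHeartbeats 1000000 in
lemma key (a c : ℍ[ℝ]) :
    !![a,-c;c,a] * (G 0 * star !![a,-c;c,a] * G 0)
      = ((a * star a - c * star c).re) • (1:A2) + ((c * star a + a * star c).re) • P := by
  show !![a,-c;c,a] * (!![1,0;0,-1] * star !![a,-c;c,a] * !![1,0;0,-1]) = _
  rw [star2, Matrix.mul_fin_two, Matrix.mul_fin_two, Matrix.mul_fin_two, Matrix.one_fin_two]
  unfold P
  ext i j <;> fin_cases i <;> fin_cases j <;>
    simp [Quaternion.ext_iff, Quaternion.re_mul, Quaternion.imI_mul, Quaternion.imJ_mul,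
      Quaternion.imK_mul] <;> ring

lemma comm_entries (M : A2) (h : M * P = P * M) :
    M = !![M 0 0, -(M 1 0); M 1 0, M 0 0] := by
  have h' : !![M 0 0, M 0 1; M 1 0, M 1 1] * !![0,-1;1,0]
      = !![0,-1;1,0] * !![M 0 0, M 0 1; M 1 0, M 1 1] := by
    rw [← Matrix.eta_fin_two M]; exact h
  rw [Matrix.mul_fin_two, Matrix.mul_fin_two] at h'
  have e1 : M 0 1 = -(M 1 0) := by
    have := congrFun (congrFun h' 0) 0
    simpa using this
  have e2 : M 0 0 = M 1 1 := by
    have := congrFun (congrFun h' 0) 1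
    simpa using this
  conv_lhs => rw [Matrix.eta_fin_two M]
  rw [e1, ← e2]

/-- For ψ even, `ψ * reverse ψ` lies in the span of `1` and `γ₅`. -/
theorem even_mul_reverse_mem_span :
    ∀ ψ ∈ CliffordAlgebra.even Q13, ∃ σ ω : ℝ,
      ψ * reverse (Q := Q13) ψ = σ • (1 : STA) + ω • γ₅ := by
  intro ψ hψ
  have hM := ρ_even_comm ψ hψ
  have hfrm := comm_entries (ρ ψ) hM
  set a := ρ ψ 0 0 with ha
  set c := ρ ψ 1 0 with hc
  refine ⟨(a * star a - c * star c).re, (c * star a + a * star c).re, ρ_inj ?_⟩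
  rw [_root_.map_mul, _root_.map_add, _root_.map_smul, _root_.map_smul, _root_.map_one, ρ_γ₅,
    ρ_reverse, hfrm]
  exact key a c
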